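/- Let G = (V,E) be a finite simple graph and let S ⊆ V be a locating-dominating set of G. Then S is a locating-dominating set of the complement graph Ḡ if and only if there is no vertex u ∈ V∖S with S ⊆ N(u). -/
import Mathlib


open SimpleGraph

/-- `S` is a dominating set of `G`: every vertex outside `S` has a neighbor in `S`. -/
def isDomSet {α : Type*} (G : SimpleGraph α) (S : Set α) : Prop :=
  ∀ v ∉ S, ∃ u ∈ S, G.Adj v u

/-- `S` is a locating-dominating set (LD-set) of `G`. -/
def isLDSet {α : Type*} (G : SimpleGraph α) (S : Set α) : Prop :=
  isDomSet G S ∧ ∀ u ∉ S, ∀ v ∉ S, u ≠ v →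
    G.neighborSet u ∩ S ≠ G.neighborSet v ∩ S

/-- The location-domination number `λ(G)`. -/
noncomputable def ldNum {α : Type*} (G : SimpleGraph α) : ℕ :=
  sInf {n | ∃ S : Set α, isLDSet G S ∧ S.ncard = n}

/-- The global location-domination number `λ_g(G)`. -/
noncomputable def gldNum {α : Type*} (G : SimpleGraph α) : ℕ :=
  sInf {n | ∃ S : Set α, isLDSet G S ∧ isLDSet Gᶜ S ∧ S.ncard = n}

/-- `G` is bipartite with stable sets `U` and `W`. -/
def bipartiteWith {α : Type*} (G : SimpleGraph α) (U W : Set α) : Prop :=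
  U ∪ W = Set.univ ∧ Disjoint U W ∧
    ∀ ⦃u v : α⦄, G.Adj u v → (u ∈ U ∧ v ∈ W) ∨ (u ∈ W ∧ v ∈ U)

theorem stmt2 {V : Type*} [Fintype V] (G : SimpleGraph V) (S : Set V)
    (hS : isLDSet G S) :
    isLDSet Gᶜ S ↔ ¬ ∃ u ∉ S, S ⊆ G.neighborSet u := by
  constructor
  · rintro ⟨hdom, -⟩ ⟨u, hu, hsub⟩
    obtain ⟨w, hw, hadj⟩ := hdom u hu
    rw [SimpleGraph.compl_adj] at hadj
    exact hadj.2 (hsub hw)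
  · intro h
    constructor
    · intro v hv
      by_contra hc
      push_neg at hc
      refine h ⟨v, hv, fun w hw => ?_⟩
      by_contra hn
      exact hc w hw ⟨fun he => hv (he ▸ hw), hn⟩
    · intro u hu v hv huv heq
      apply hS.2 u hu v hv huv
      ext w
      simp only [Set.mem_inter_iff, SimpleGraph.mem_neighborSet]
      have key : ∀ a b : V, b ∉ S →
          Gᶜ.neighborSet a ∩ S = Gᶜ.neighborSet b ∩ S →
          ∀ w, G.Adj a w ∧ w ∈ S → G.Adj b w := by
        intro a b hb hab w ⟨haw, hwS⟩
        by_contra hn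
        have : w ∈ Gᶜ.neighborSet b ∩ S :=
          ⟨⟨fun he => hb (he ▸ hwS), hn⟩, hwS⟩
        rw [← hab] at this
        exact this.1.2 haw
      exact ⟨fun hw => ⟨key u v hv heq w hw, hw.2⟩,
        fun hw => ⟨key v u hu heq.symm w hw, hw.2⟩⟩
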